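/- In the setting of Lemma 3.2, any integer relation h' on the circuits y^1,…,y^{k+t−1} of A_{t,r+1} must satisfy h'_k = h'_{k+1} = ⋯ = h'_{k+t−1} (equality of the last t coefficients), as forced by examining the column indexed by the new vertex u_{r+1}. -/

import Mathlib

/-- The vectors `q^j ∈ ℤ^t` with `q^j_j = 1`, `q^j_{j+1 mod t} = −1`, other entries `0`. -/
def qvec (t : ℕ) (j : Fin t) : Fin t → ℤ :=
  fun a => (if a = j then 1 else 0) - (if (a : ℕ) = ((j : ℕ) + 1) % t then 1 else 0)

theorem last_coeffs_equal (t r m : ℕ) (ht : 4 ≤ t) (htr : t ≤ r)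
    (yold : Fin m → Matrix (Fin t) (Fin (r + 1)) ℤ)
    (ynew : Fin t → Matrix (Fin t) (Fin (r + 1)) ℤ)
    (hyold : ∀ i a, yold i a (Fin.last r) = 0)
    (hynew : ∀ j a, ynew j a (Fin.last r) = qvec t j a)
    (c : Fin m → ℤ) (d : Fin t → ℤ)
    (hrel : (∑ i, c i • yold i) + (∑ j, d j • ynew j) = 0) :
    ∀ j j' : Fin t, d j = d j' := by
  have htpos : 0 < t := by omega
  haveI : NeZero t := ⟨by omega⟩
  -- evaluate the relation at entry (a, last column)
  have key : ∀ a : Fin t, d a = d (a - 1) := by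
    intro a
    have h := congrFun (congrFun hrel a) (Fin.last r)
    simp only [Matrix.add_apply, Matrix.sum_apply, Matrix.smul_apply, hyold, hynew,
      smul_zero, Finset.sum_const_zero, zero_add, Matrix.zero_apply, smul_eq_mul] at h
    have hsum : ∀ j : Fin t, d j * qvec t j a
        = (if j = a then d j else 0) - (if j = a - 1 then d j else 0) := by
      intro j
      have hc : ((a : ℕ) = ((j : ℕ) + 1) % t) ↔ j = a - 1 := by
        have h1 : (((j + 1 : Fin t)) : ℕ) = ((j : ℕ) + 1) % t := by
          have h2 : ((1 : Fin t) : ℕ) = 1 := by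
            rw [Fin.val_one']; exact Nat.mod_eq_of_lt (by omega)
          rw [Fin.val_add, h2]
        constructor
        · intro hh
          have : a = j + 1 := by
            apply Fin.ext; rw [h1]; exact hh
          rw [this]; open Fin.CommRing in ring
        · intro hh
          have : a = j + 1 := by rw [hh]; open Fin.CommRing in ring
          rw [this, h1]
      simp only [qvec, hc]
      rw [mul_sub]
      congr 1
      · by_cases h1 : j = a
        · simp [h1, eq_comm]
        · simp [h1, Ne.symm h1]
      · by_cases h1 : j = a - 1 <;> simp [h1]
    rw [Finset.sum_congr rfl (fun j _ => hsum j), Finset.sum_sub_distrib,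
      Finset.sum_ite_eq' , Finset.sum_ite_eq'] at h
    simp at h
    linarith
  have step : ∀ j : Fin t, d (j + 1) = d j := by
    intro j
    have := key (j + 1)
    simpa using this
  open Fin.NatCast Fin.CommRing in
  have base : ∀ n : ℕ, d ((n : Fin t)) = d 0 := by
    intro n
    induction n with
    | zero => simp
    | succ k ih =>
      have : ((k + 1 : ℕ) : Fin t) = (k : Fin t) + 1 := by push_cast; ring
      rw [this, step, ih]
  intro j j'
  open Fin.NatCast in
  have hj : d j = d 0 := by
    have := base (j : ℕ); rwa [Fin.cast_val_eq_self] at this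
  open Fin.NatCast in
  have hj' : d j' = d 0 := by
    have := base (j' : ℕ); rwa [Fin.cast_val_eq_self] at this
  rw [hj, hj']
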